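/- For vectors A, B in R^4, the norm of the triple product satisfies |[A,B,C]| = |A| |B| |C^perp| sin(alpha), where alpha is the angle between A and B and C^perp is the component of C orthogonal to span{A,B}. -/

import Mathlib

open scoped RealInnerProductSpace

noncomputable section

abbrev E4 := EuclideanSpace ℝ (Fin 4)

/-- The triple product `[A,B,C]` in `ℝ⁴`: the vector whose `i`-th component is the
determinant of the matrix with rows `A, B, C, eᵢ`; equivalently the unique vector with
`⟪[A,B,C], X⟫ = det (A,B,C,X)` for all `X`. -/
def trip (A B C : E4) : E4 :=
  WithLp.toLp 2 (fun i => Matrix.det (Matrix.of ![(A : Fin 4 → ℝ), (B : Fin 4 → ℝ), (C : Fin 4 → ℝ), Pi.single i 1]))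


private lemma det_fin_four' (M : Matrix (Fin 4) (Fin 4) ℝ) :
    M.det =
      M 0 0 * (M 1 1 * (M 2 2 * M 3 3 - M 2 3 * M 3 2) - M 1 2 * (M 2 1 * M 3 3 - M 2 3 * M 3 1)
        + M 1 3 * (M 2 1 * M 3 2 - M 2 2 * M 3 1))
      - M 0 1 * (M 1 0 * (M 2 2 * M 3 3 - M 2 3 * M 3 2) - M 1 2 * (M 2 0 * M 3 3 - M 2 3 * M 3 0)
        + M 1 3 * (M 2 0 * M 3 2 - M 2 2 * M 3 0))
      + M 0 2 * (M 1 0 * (M 2 1 * M 3 3 - M 2 3 * M 3 1) - M 1 1 * (M 2 0 * M 3 3 - M 2 3 * M 3 0)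
        + M 1 3 * (M 2 0 * M 3 1 - M 2 1 * M 3 0))
      - M 0 3 * (M 1 0 * (M 2 1 * M 3 2 - M 2 2 * M 3 1) - M 1 1 * (M 2 0 * M 3 2 - M 2 2 * M 3 0)
        + M 1 2 * (M 2 0 * M 3 1 - M 2 1 * M 3 0)) := by
  rw [Matrix.det_succ_row_zero]
  simp [Fin.sum_univ_succ, Matrix.det_fin_three, Fin.succAbove]
  ring

set_option maxHeartbeats 2000000 in
private lemma trip_key (A B C : E4) : ‖trip A B C‖^2 =
    ⟪A,A⟫*(⟪B,B⟫*⟪C,C⟫ - ⟪B,C⟫*⟪B,C⟫) - ⟪A,B⟫*(⟪A,B⟫*⟪C,C⟫ - ⟪B,C⟫*⟪A,C⟫)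
      + ⟪A,C⟫*(⟪A,B⟫*⟪B,C⟫ - ⟪B,B⟫*⟪A,C⟫) := by
  rw [← real_inner_self_eq_norm_sq]
  simp only [PiLp.inner_apply, RCLike.inner_apply, conj_trivial, Fin.sum_univ_four,
    trip, det_fin_four', Matrix.of_apply, Matrix.cons_val', Matrix.cons_val_zero,
    Matrix.cons_val_one, Matrix.head_cons, Matrix.cons_val_two, Matrix.tail_cons,
    Matrix.cons_val_three, Matrix.head_fin_const, Matrix.empty_val', Matrix.cons_val_fin_one,
    Pi.single_apply, PiLp.toLp_apply]
  norm_num [Fin.ext_iff, show ((3:Fin 4):ℕ) = 3 from rfl, show ((2:Fin 4):ℕ) = 2 from rfl,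
    show ((1:Fin 4):ℕ) = 1 from rfl, show ((0:Fin 4):ℕ) = 0 from rfl]
  ring

set_option maxHeartbeats 2000000 in
private lemma trip_shift (A B P : E4) (a b : ℝ) : trip A B (a•A + b•B + P) = trip A B P := by
  ext i
  simp only [trip, det_fin_four', Matrix.of_apply, Matrix.cons_val', Matrix.cons_val_zero,
    Matrix.cons_val_one, Matrix.head_cons, Matrix.cons_val_two, Matrix.tail_cons,
    Matrix.cons_val_three, Matrix.head_fin_const, Matrix.empty_val', Matrix.cons_val_fin_one,
    PiLp.add_apply, PiLp.smul_apply, smul_eq_mul, PiLp.toLp_apply]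
  ring

/-- `‖[A,B,C]‖ = ‖A‖ ‖B‖ ‖C⊥‖ sin(α)`, where `α` is the angle between the nonzero vectors
`A` and `B` and `C⊥` is the component of `C` orthogonal to `span{A,B}`. -/
theorem norm_trip (A B C : E4) (hA : A ≠ 0) (hB : B ≠ 0) :
    ‖trip A B C‖ =
      ‖A‖ * ‖B‖ *
        ‖((Submodule.orthogonalProjectionOnto ((Submodule.span ℝ {A, B})ᗮ) C :
            (Submodule.span ℝ {A, B} : Submodule ℝ E4)ᗮ) : E4)‖ *
        Real.sin (InnerProductGeometry.angle A B) := by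
  set K : Submodule ℝ E4 := Submodule.span ℝ {A, B} with hK
  set P : E4 := ((Submodule.orthogonalProjectionOnto Kᗮ C : Kᗮ) : E4) with hP
  -- C - P ∈ K
  have hCP : C - P ∈ K := by
    have : C - P ∈ Kᗮᗮ := Submodule.sub_starProjection_mem_orthogonal (K := Kᗮ) C
    rwa [Submodule.orthogonal_orthogonal] at this
  obtain ⟨a, b, hab⟩ := Submodule.mem_span_pair.mp hCP
  have hC : C = a • A + b • B + P := by rw [hab]; abel
  have hPK : P ∈ Kᗮ := (Submodule.orthogonalProjectionOnto Kᗮ C).2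
  have hAmem : A ∈ K := Submodule.subset_span (by simp)
  have hBmem : B ∈ K := Submodule.subset_span (by simp)
  have hAP : ⟪A, P⟫ = 0 := (Submodule.mem_orthogonal K P).mp hPK A hAmem
  have hBP : ⟪B, P⟫ = 0 := (Submodule.mem_orthogonal K P).mp hPK B hBmem
  have htrip : trip A B C = trip A B P := by rw [hC, trip_shift]
  have hsq : ‖trip A B C‖ ^ 2 = (⟪A,A⟫ * ⟪B,B⟫ - ⟪A,B⟫ * ⟪A,B⟫) * ⟪P,P⟫ := by
    rw [htrip, trip_key, hAP, hBP]; ring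
  have hcs : 0 ≤ ⟪A,A⟫ * ⟪B,B⟫ - ⟪A,B⟫ * ⟪A,B⟫ :=
    sub_nonneg.mpr (real_inner_mul_inner_self_le A B)
  have hsin : Real.sin (InnerProductGeometry.angle A B) * (‖A‖ * ‖B‖) =
      Real.sqrt (⟪A,A⟫ * ⟪B,B⟫ - ⟪A,B⟫ * ⟪A,B⟫) :=
    InnerProductGeometry.sin_angle_mul_norm_mul_norm A B
  have hsinn : 0 ≤ Real.sin (InnerProductGeometry.angle A B) :=
    Real.sin_nonneg_of_nonneg_of_le_pi (InnerProductGeometry.angle_nonneg A B)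
      (InnerProductGeometry.angle_le_pi A B)
  have hrhs : (‖A‖ * ‖B‖ * ‖P‖ * Real.sin (InnerProductGeometry.angle A B)) ^ 2 =
      (⟪A,A⟫ * ⟪B,B⟫ - ⟪A,B⟫ * ⟪A,B⟫) * ⟪P,P⟫ := by
    have h1 : (‖A‖ * ‖B‖ * ‖P‖ * Real.sin (InnerProductGeometry.angle A B)) ^ 2 =
        (Real.sin (InnerProductGeometry.angle A B) * (‖A‖ * ‖B‖)) ^ 2 * ‖P‖ ^ 2 := by ring
    rw [h1, hsin, Real.sq_sqrt hcs, ← real_inner_self_eq_norm_sq]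
  have hnn : 0 ≤ ‖A‖ * ‖B‖ * ‖P‖ * Real.sin (InnerProductGeometry.angle A B) := by
    have := norm_nonneg A; have := norm_nonneg B; have := norm_nonneg P; positivity
  have := hsq.trans hrhs.symm
  nlinarith [norm_nonneg (trip A B C), this, hnn,
    sq_nonneg (‖trip A B C‖ - (‖A‖ * ‖B‖ * ‖P‖ * Real.sin (InnerProductGeometry.angle A B)))]
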